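/- Let ε > 0 and define C₁ = sup{ ‖p‖_{[-1,1],∞} : p ∈ span{ζ_i : σ_i > ε}, ‖p‖_{m,∞} ≤ 1 }. Then C₁ ≤ C(m,n,γ, ε / (√2 · c_{n,γ,α,β})). -/

import Mathlib

open MeasureTheory Finset

noncomputable section

/-- The equispaced node `x_k = -1 + 2k/m` in `[-1,1]`. -/
def node (m k : ℕ) : ℝ := -1 + 2 * (k : ℝ) / (m : ℝ)

/-- The discrete semi-inner product `⟨f,g⟩_{m,2} = (2/(m+1)) Σ_{k=0}^m f(x_k) conj(g(x_k))`. -/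
def discInner (m : ℕ) (f g : ℝ → ℂ) : ℂ :=
  (2 / ((m : ℂ) + 1)) * ∑ k ∈ Finset.range (m + 1), f (node m k) * (starRingEnd ℂ) (g (node m k))

/-- The discrete `ℓ²` semi-norm `‖f‖_{m,2}`. -/
def discNorm (m : ℕ) (f : ℝ → ℂ) : ℝ :=
  Real.sqrt ((2 / ((m : ℝ) + 1)) * ∑ k ∈ Finset.range (m + 1), ‖f (node m k)‖ ^ 2)

/-- The discrete sup semi-norm `‖f‖_{m,∞} = max_{0 ≤ k ≤ m} |f(x_k)|`. -/
def discSup (m : ℕ) (f : ℝ → ℂ) : ℝ :=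
  ⨆ k : Fin (m + 1), ‖f (node m (k : ℕ))‖

/-- The uniform norm `‖f‖_{I,∞} = sup_{x ∈ I} |f(x)|`. -/
def supNorm (I : Set ℝ) (f : ℝ → ℂ) : ℝ :=
  ⨆ x : I, ‖f (x : ℝ)‖

/-- The Jacobi-type weight `w_γ^{(α,β)}(x) = (1 - x/γ)^α (1 + x/γ)^β`. -/
def jweight (α β γ x : ℝ) : ℝ := (1 - x / γ) ^ α * (1 + x / γ) ^ β

/-- The weighted `L²` inner product `⟨f,g⟩_w = ∫_{-γ}^{γ} f conj(g) w_γ^{(α,β)}`. -/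
def wInner (α β γ : ℝ) (f g : ℝ → ℂ) : ℂ :=
  ∫ x in (-γ)..γ, f x * (starRingEnd ℂ) (g x) * ((jweight α β γ x : ℝ) : ℂ)

/-- The weighted `L²` norm `‖f‖_w`. -/
def wNorm (α β γ : ℝ) (f : ℝ → ℂ) : ℝ :=
  Real.sqrt (∫ x in (-γ)..γ, ‖f x‖ ^ 2 * jweight α β γ x)

/-- `h₀^{(α,β)} = 2^{α+β+1} Γ(α+1) Γ(β+1) / ((α+β+1) Γ(α+β+1))`. -/
def h0 (α β : ℝ) : ℝ :=
  2 ^ (α + β + 1) * Real.Gamma (α + 1) * Real.Gamma (β + 1) /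
    ((α + β + 1) * Real.Gamma (α + β + 1))

/-- A complex polynomial regarded as a function of a real variable. -/
def pf (p : Polynomial ℂ) : ℝ → ℂ := fun x => p.eval (x : ℂ)

/-- The constant `c_{n,γ,α,β} = max_{x ∈ [-γ,γ]} (Σ_{i=0}^n |φ_i(x)|²)^{1/2}`. -/
def cConst (n : ℕ) (γ : ℝ) (φ : ℕ → Polynomial ℂ) : ℝ :=
  ⨆ x : Set.Icc (-γ) γ,
    Real.sqrt (∑ i ∈ Finset.range (n + 1), ‖pf (φ i) (x : ℝ)‖ ^ 2)

/-- The regularized frame approximation operator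
`Q_δ(f) = Σ_{i : σ_i > δ} σ_i^{-2} ⟨f,ζ_i⟩_{m,2} ζ_i`. -/
def Qop (m n : ℕ) (ζ : Fin (n + 1) → Polynomial ℂ) (σ : Fin (n + 1) → ℝ) (δ : ℝ)
    (f : ℝ → ℂ) : ℝ → ℂ :=
  fun x => ∑ i ∈ Finset.univ.filter (fun i : Fin (n + 1) => δ < σ i),
    (discInner m f (pf (ζ i)) / ((σ i ^ 2 : ℝ) : ℂ)) * pf (ζ i) x

/-- The quantity `C(m,n,γ,δ) = sup{‖p‖_{[-1,1],∞} : p ∈ P_n, ‖p‖_{m,∞} ≤ 1,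
‖p‖_{[-γ,γ],∞} ≤ δ⁻¹}`. -/
def Cquant (m n : ℕ) (γ δ : ℝ) : ℝ :=
  sSup {r : ℝ | ∃ p : Polynomial ℂ, p.natDegree ≤ n ∧ discSup m (pf p) ≤ 1 ∧
    supNorm (Set.Icc (-γ) γ) (pf p) ≤ δ⁻¹ ∧ r = supNorm (Set.Icc (-1) 1) (pf p)}

/-- The constant `C₁ = sup{‖p‖_{[-1,1],∞} : p ∈ span{ζ_i : σ_i > ε}, ‖p‖_{m,∞} ≤ 1}`. -/
def C1const (m n : ℕ) (ζ : Fin (n + 1) → Polynomial ℂ) (σ : Fin (n + 1) → ℝ) (ε : ℝ) : ℝ :=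
  sSup {r : ℝ | ∃ p : Polynomial ℂ, p ∈ Submodule.span ℂ (ζ '' {i | ε < σ i}) ∧
    discSup m (pf p) ≤ 1 ∧ r = supNorm (Set.Icc (-1) 1) (pf p)}

/-- The constant `C₂ = sup{‖p - Q_ε(p)‖_{[-1,1],∞} : p ∈ P_n, ‖p‖_{[-γ,γ],∞} ≤ ε⁻¹}`. -/
def C2const (m n : ℕ) (γ : ℝ) (ζ : Fin (n + 1) → Polynomial ℂ) (σ : Fin (n + 1) → ℝ)
    (ε : ℝ) : ℝ :=
  sSup {r : ℝ | ∃ p : Polynomial ℂ, p.natDegree ≤ n ∧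
    supNorm (Set.Icc (-γ) γ) (pf p) ≤ ε⁻¹ ∧
    r = supNorm (Set.Icc (-1) 1) (fun x => pf p x - Qop m n ζ σ ε (pf p) x)}

/-- The condition number `κ(Q_δ) = sup{‖Q_δ(q)‖_{[-1,1],∞} : q ∈ C([-1,1]), ‖q‖_{m,∞} ≤ 1}`. -/
def kappa (m n : ℕ) (ζ : Fin (n + 1) → Polynomial ℂ) (σ : Fin (n + 1) → ℝ) (δ : ℝ) : ℝ :=
  sSup {r : ℝ | ∃ q : ℝ → ℂ, ContinuousOn q (Set.Icc (-1) 1) ∧ discSup m q ≤ 1 ∧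
    r = supNorm (Set.Icc (-1) 1) (Qop m n ζ σ δ q)}

/-- The Bernstein ellipse `E_θ = {(z + z⁻¹)/2 : 1 ≤ |z| ≤ θ}`. -/
def bernsteinEllipse (θ : ℝ) : Set ℂ :=
  {w | ∃ z : ℂ, 1 ≤ ‖z‖ ∧ ‖z‖ ≤ θ ∧ w = (z + z⁻¹) / 2}

/-- The uniform norm on a subset of `ℂ`. -/
def supNormC (E : Set ℂ) (f : ℂ → ℂ) : ℝ :=
  ⨆ z : E, ‖f (z : ℂ)‖

/-- The `C^k` norm `‖f‖_{C^k([-1,1])} = max_{0 ≤ j ≤ k} ‖f^{(j)}‖_{[-1,1],∞}`. -/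
def CkNorm (k : ℕ) (f : ℝ → ℂ) : ℝ :=
  ⨆ j : Fin (k + 1), supNorm (Set.Icc (-1) 1) (iteratedDerivWithin (j : ℕ) f (Set.Icc (-1) 1))


section StmtHelpers

open intervalIntegral Polynomial

lemma pf_continuous (q : Polynomial ℂ) : Continuous (pf q) :=
  q.continuous.comp Complex.continuous_ofReal

lemma abs_pf_continuous (q : Polynomial ℂ) :
    Continuous fun x : ℝ => ‖pf q x‖ :=
  continuous_norm.comp (pf_continuous q)

lemma le_supNorm (q : Polynomial ℂ) {a b x : ℝ} (hx : x ∈ Set.Icc a b) :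
    ‖pf q x‖ ≤ supNorm (Set.Icc a b) (pf q) := by
  have hbdd : BddAbove (Set.range fun y : Set.Icc a b => ‖pf q (y : ℝ)‖) := by
    have himg : (fun y : ℝ => ‖pf q y‖) '' Set.Icc a b
        = Set.range fun y : Set.Icc a b => ‖pf q (y : ℝ)‖ :=
      Set.image_eq_range _ _
    rw [← himg]
    exact (isCompact_Icc.image (abs_pf_continuous q)).bddAbove
  exact le_ciSup hbdd (⟨x, hx⟩ : Set.Icc a b)

lemma le_discSup (m : ℕ) (f : ℝ → ℂ) {k : ℕ} (hk : k < m + 1) :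
    ‖f (node m k)‖ ≤ discSup m f := by
  unfold discSup
  exact le_ciSup (f := fun j : Fin (m + 1) => ‖f (node m (j : ℕ))‖)
    (Set.Finite.bddAbove (Set.finite_range _)) (⟨k, hk⟩ : Fin (m + 1))

lemma pf_sum {ι : Type*} (s : Finset ι) (a : ι → ℂ) (P : ι → Polynomial ℂ) (x : ℝ) :
    pf (∑ i ∈ s, a i • P i) x = ∑ i ∈ s, a i * pf (P i) x := by
  simp [pf, Polynomial.eval_finset_sum]

lemma discInner_sum_left (m : ℕ) {ι : Type*} (s : Finset ι) (a : ι → ℂ)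
    (P : ι → Polynomial ℂ) (g : ℝ → ℂ) :
    discInner m (pf (∑ i ∈ s, a i • P i)) g
      = ∑ i ∈ s, a i * discInner m (pf (P i)) g := by
  simp only [discInner, pf_sum, Finset.sum_mul, Finset.mul_sum]
  rw [Finset.sum_comm]
  refine Finset.sum_congr rfl fun i _ => Finset.sum_congr rfl fun k _ => by ring

lemma discInner_sum_right (m : ℕ) {ι : Type*} (s : Finset ι) (a : ι → ℂ)
    (P : ι → Polynomial ℂ) (f : ℝ → ℂ) :
    discInner m f (pf (∑ i ∈ s, a i • P i))
      = ∑ i ∈ s, (starRingEnd ℂ) (a i) * discInner m f (pf (P i)) := by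
  simp only [discInner, pf_sum, map_sum, map_mul, Finset.mul_sum, Finset.sum_mul]
  rw [Finset.sum_comm]
  refine Finset.sum_congr rfl fun i _ => Finset.sum_congr rfl fun k _ => by ring

lemma jweight_integrable {α β γ : ℝ} (hα : -1 < α) (hβ : -1 < β) (hγ : 0 < γ) :
    IntervalIntegrable (jweight α β γ) MeasureTheory.volume (-γ) γ := by
  have hγ' : (γ : ℝ) ≠ 0 := ne_of_gt hγ
  have h0β : IntervalIntegrable (fun x : ℝ => x ^ β) MeasureTheory.volume 0 2 :=
    intervalIntegral.intervalIntegrable_rpow' hβ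
  have h0α : IntervalIntegrable (fun x : ℝ => x ^ α) MeasureTheory.volume 0 2 :=
    intervalIntegral.intervalIntegrable_rpow' hα
  -- integrability of x ↦ (1 + x/γ)^β on [-γ, γ]
  have h1 : IntervalIntegrable (fun x : ℝ => (1 + x / γ) ^ β) MeasureTheory.volume (-γ) γ := by
    have h2 := (h0β.comp_add_right 1).comp_mul_right (c := γ⁻¹)
    have e1 : ((0 : ℝ) - 1) / γ⁻¹ = -γ := by rw [div_eq_mul_inv, inv_inv]; ring
    have e2 : ((2 : ℝ) - 1) / γ⁻¹ = γ := by rw [div_eq_mul_inv, inv_inv]; ring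
    rw [e1, e2] at h2
    have hfun : (fun x : ℝ => (1 + x / γ) ^ β) = fun x : ℝ => (x * γ⁻¹ + 1) ^ β := by
      funext x; rw [div_eq_mul_inv, add_comm]
    rw [hfun]; exact h2
  -- integrability of x ↦ (1 - x/γ)^α on [-γ, γ]
  have h3 : IntervalIntegrable (fun x : ℝ => (1 - x / γ) ^ α) MeasureTheory.volume (-γ) γ := by
    have h2 := (h0α.comp_add_right 1).comp_mul_right (c := -γ⁻¹)
    have e1 : ((0 : ℝ) - 1) / (-γ⁻¹) = γ := by rw [div_eq_mul_inv, inv_neg, inv_inv]; ring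
    have e2 : ((2 : ℝ) - 1) / (-γ⁻¹) = -γ := by rw [div_eq_mul_inv, inv_neg, inv_inv]; ring
    rw [e1, e2] at h2
    have hfun : (fun x : ℝ => (1 - x / γ) ^ α) = fun x : ℝ => (x * -γ⁻¹ + 1) ^ α := by
      funext x; congr 1; rw [div_eq_mul_inv]; ring
    rw [hfun]; exact h2.symm
  have hsub1 : Set.uIcc (-γ) (0 : ℝ) ⊆ Set.uIcc (-γ) γ := by
    rw [Set.uIcc_of_le (by linarith : -γ ≤ (0:ℝ)), Set.uIcc_of_le (by linarith : -γ ≤ γ)]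
    exact Set.Icc_subset_Icc le_rfl (by linarith)
  have hsub2 : Set.uIcc (0 : ℝ) γ ⊆ Set.uIcc (-γ) γ := by
    rw [Set.uIcc_of_le (by linarith : (0:ℝ) ≤ γ), Set.uIcc_of_le (by linarith : -γ ≤ γ)]
    exact Set.Icc_subset_Icc (by linarith) le_rfl
  have I1 : IntervalIntegrable (jweight α β γ) MeasureTheory.volume (-γ) 0 := by
    have hb := (h1.mono_set hsub1)
    have hcont : ContinuousOn (fun x : ℝ => (1 - x / γ) ^ α) (Set.uIcc (-γ) 0) := by
      apply ContinuousOn.rpow_const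
      · exact (continuous_const.sub (continuous_id.div_const γ)).continuousOn
      · intro x hx
        left
        rw [Set.uIcc_of_le (by linarith : -γ ≤ (0:ℝ))] at hx
        have hx0 : x ≤ 0 := hx.2
        have h1 : x / γ ≤ 0 := div_nonpos_of_nonpos_of_nonneg hx0 hγ.le
        have : (0:ℝ) < 1 - x / γ := by linarith
        exact ne_of_gt this
    have := hb.continuousOn_mul hcont
    show IntervalIntegrable (fun x => (1 - x / γ) ^ α * (1 + x / γ) ^ β) _ _ _
    simpa using this
  have I2 : IntervalIntegrable (jweight α β γ) MeasureTheory.volume 0 γ := by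
    have hb := (h3.mono_set hsub2)
    have hcont : ContinuousOn (fun x : ℝ => (1 + x / γ) ^ β) (Set.uIcc (0 : ℝ) γ) := by
      apply ContinuousOn.rpow_const
      · exact (continuous_const.add (continuous_id.div_const γ)).continuousOn
      · intro x hx
        left
        rw [Set.uIcc_of_le (by linarith : (0:ℝ) ≤ γ)] at hx
        have hx0 : 0 ≤ x := hx.1
        have h1 : 0 ≤ x / γ := div_nonneg hx0 hγ.le
        have : (0:ℝ) < 1 + x / γ := by linarith
        exact ne_of_gt this
    have := hb.mul_continuousOn hcont
    show IntervalIntegrable (fun x => (1 - x / γ) ^ α * (1 + x / γ) ^ β) _ _ _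
    simpa using this
  exact I1.trans I2

lemma contMul_jweight_integrable {α β γ : ℝ}
    (hw : IntervalIntegrable (jweight α β γ) MeasureTheory.volume (-γ) γ)
    (f : ℝ → ℂ) (hf : Continuous f) :
    IntervalIntegrable (fun x => f x * ((jweight α β γ x : ℝ) : ℂ))
      MeasureTheory.volume (-γ) γ := by
  have hw' : IntervalIntegrable (fun x => ((jweight α β γ x : ℝ) : ℂ))
      MeasureTheory.volume (-γ) γ := ⟨hw.1.ofReal, hw.2.ofReal⟩
  exact hw'.continuousOn_mul hf.continuousOn

lemma wInner_sum_left {α β γ : ℝ}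
    (hw : IntervalIntegrable (jweight α β γ) MeasureTheory.volume (-γ) γ)
    {ι : Type*} (s : Finset ι) (a : ι → ℂ) (P : ι → Polynomial ℂ) (q : Polynomial ℂ) :
    wInner α β γ (pf (∑ i ∈ s, a i • P i)) (pf q)
      = ∑ i ∈ s, a i * wInner α β γ (pf (P i)) (pf q) := by
  unfold wInner
  have hfun : (fun x : ℝ => pf (∑ i ∈ s, a i • P i) x * (starRingEnd ℂ) (pf q x)
        * ((jweight α β γ x : ℝ) : ℂ))
      = fun x : ℝ => ∑ i ∈ s, a i *
        (pf (P i) x * (starRingEnd ℂ) (pf q x) * ((jweight α β γ x : ℝ) : ℂ)) := by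
    funext x
    rw [pf_sum]
    simp only [Finset.sum_mul, Finset.mul_sum]
    exact Finset.sum_congr rfl fun i _ => by ring
  rw [hfun]
  rw [intervalIntegral.integral_finset_sum]
  · refine Finset.sum_congr rfl fun i _ => ?_
    rw [intervalIntegral.integral_const_mul]
  · intro i _
    have hcont : Continuous fun x : ℝ =>
        a i * (pf (P i) x * (starRingEnd ℂ) (pf q x)) :=
      continuous_const.mul ((pf_continuous (P i)).mul (continuous_star.comp (pf_continuous q)))
    have := contMul_jweight_integrable hw _ hcont
    simpa [mul_assoc] using this

lemma wInner_sum_right {α β γ : ℝ}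
    (hw : IntervalIntegrable (jweight α β γ) MeasureTheory.volume (-γ) γ)
    {ι : Type*} (s : Finset ι) (a : ι → ℂ) (P : ι → Polynomial ℂ) (q : Polynomial ℂ) :
    wInner α β γ (pf q) (pf (∑ i ∈ s, a i • P i))
      = ∑ i ∈ s, (starRingEnd ℂ) (a i) * wInner α β γ (pf q) (pf (P i)) := by
  unfold wInner
  have hfun : (fun x : ℝ => pf q x * (starRingEnd ℂ) (pf (∑ i ∈ s, a i • P i) x)
        * ((jweight α β γ x : ℝ) : ℂ))
      = fun x : ℝ => ∑ i ∈ s, (starRingEnd ℂ) (a i) *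
        (pf q x * (starRingEnd ℂ) (pf (P i) x) * ((jweight α β γ x : ℝ) : ℂ)) := by
    funext x
    rw [pf_sum]
    simp only [map_sum, map_mul, Finset.sum_mul, Finset.mul_sum]
    exact Finset.sum_congr rfl fun i _ => by ring
  rw [hfun]
  rw [intervalIntegral.integral_finset_sum]
  · refine Finset.sum_congr rfl fun i _ => ?_
    rw [intervalIntegral.integral_const_mul]
  · intro i _
    have hcont : Continuous fun x : ℝ =>
        (starRingEnd ℂ) (a i) * (pf q x * (starRingEnd ℂ) (pf (P i) x)) :=
      continuous_const.mul ((pf_continuous q).mul (continuous_star.comp (pf_continuous (P i))))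
    have := contMul_jweight_integrable hw _ hcont
    simpa [mul_assoc] using this

lemma wInner_zero_left {α β γ : ℝ} (q : Polynomial ℂ) :
    wInner α β γ (pf (0 : Polynomial ℂ)) (pf q) = 0 := by
  simp [wInner, pf]

lemma sqrt_cauchy {ι : Type*} (s : Finset ι) (f g : ι → ℝ) :
    ∑ i ∈ s, f i * g i
      ≤ Real.sqrt (∑ i ∈ s, f i ^ 2) * Real.sqrt (∑ i ∈ s, g i ^ 2) := by
  have h := Finset.sum_mul_sq_le_sq_mul_sq s f g
  calc ∑ i ∈ s, f i * g i ≤ |∑ i ∈ s, f i * g i| := le_abs_self _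
    _ = Real.sqrt ((∑ i ∈ s, f i * g i) ^ 2) := (Real.sqrt_sq_eq_abs _).symm
    _ ≤ Real.sqrt ((∑ i ∈ s, f i ^ 2) * ∑ i ∈ s, g i ^ 2) := Real.sqrt_le_sqrt h
    _ = _ := Real.sqrt_mul (Finset.sum_nonneg fun i _ => sq_nonneg _) _

lemma phi_span {α β γ : ℝ}
    (hw : IntervalIntegrable (jweight α β γ) MeasureTheory.volume (-γ) γ)
    (n : ℕ) (φ : ℕ → Polynomial ℂ) (hφdeg : ∀ i ≤ n, (φ i).natDegree = i)
    (hφorth : ∀ i ≤ n, ∀ j ≤ n,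
      wInner α β γ (pf (φ i)) (pf (φ j)) = if i = j then 1 else 0)
    (p : Polynomial ℂ) (hp : p.natDegree ≤ n) :
    ∃ b : Fin (n + 1) → ℂ, ∑ i : Fin (n + 1), b i • φ (i : ℕ) = p := by
  classical
  set V := Polynomial.degreeLT ℂ (n + 1) with hV
  have hmem : ∀ i : Fin (n + 1), φ (i : ℕ) ∈ V := by
    intro i
    rw [hV, Polynomial.mem_degreeLT]
    calc (φ (i : ℕ)).degree ≤ ((φ (i : ℕ)).natDegree : WithBot ℕ) :=
          Polynomial.degree_le_natDegree
      _ < ((n + 1 : ℕ) : WithBot ℕ) := by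
          rw [hφdeg (i : ℕ) (Nat.lt_succ_iff.mp i.isLt)]
          exact_mod_cast i.isLt
  set ψ : Fin (n + 1) → V := fun i => ⟨φ (i : ℕ), hmem i⟩ with hψ
  have hli : LinearIndependent ℂ ψ := by
    rw [Fintype.linearIndependent_iff]
    intro g hg j
    have hg' : ∑ i : Fin (n + 1), g i • φ (i : ℕ) = 0 := by
      have := congrArg (Subtype.val) hg
      simpa [hψ] using this
    have h2 := wInner_sum_left hw Finset.univ g (fun i : Fin (n + 1) => φ (i : ℕ)) (φ (j : ℕ))
    rw [hg', wInner_zero_left] at h2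
    have hcol : ∀ i : Fin (n + 1),
        wInner α β γ (pf (φ (i : ℕ))) (pf (φ (j : ℕ))) = if i = j then 1 else 0 := by
      intro i
      rw [hφorth (i : ℕ) (Nat.lt_succ_iff.mp i.isLt) (j : ℕ) (Nat.lt_succ_iff.mp j.isLt)]
      simp [Fin.val_inj]
    simp only [hcol, mul_ite, mul_one, mul_zero, Finset.sum_ite_eq', Finset.mem_univ,
      if_true] at h2
    exact h2.symm
  have hfr : Module.finrank ℂ V = n + 1 := by
    rw [hV, (Polynomial.degreeLTEquiv ℂ (n + 1)).finrank_eq]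
    simp [Module.finrank_fin_fun]
  have hcard : Fintype.card (Fin (n + 1)) = Module.finrank ℂ V := by
    rw [Fintype.card_fin, hfr]
  have hspan := hli.span_eq_top_of_card_eq_finrank hcard
  have hpV : p ∈ V := by
    rw [hV, Polynomial.mem_degreeLT]
    calc p.degree ≤ (p.natDegree : WithBot ℕ) := Polynomial.degree_le_natDegree
      _ < ((n + 1 : ℕ) : WithBot ℕ) := by exact_mod_cast Nat.lt_succ_of_le hp
  have hmem' : (⟨p, hpV⟩ : V) ∈ Submodule.span ℂ (Set.range ψ) := by
    rw [hspan]; trivial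
  obtain ⟨b, hb⟩ := (Submodule.mem_span_range_iff_exists_fun ℂ).1 hmem'
  refine ⟨b, ?_⟩
  have := congrArg (Subtype.val) hb
  simpa [hψ] using this

end StmtHelpers

/-- `C₁ ≤ C(m,n,γ, ε/(√2 c_{n,γ,α,β}))`. -/
theorem stmt12 (α β γ : ℝ) (hα : -1 < α) (hβ : -1 < β) (hγ : 1 < γ)
    (m n : ℕ) (hn : 1 ≤ n) (hmn : n ≤ m)
    (ζ : Fin (n + 1) → Polynomial ℂ) (σ : Fin (n + 1) → ℝ) (hσ : ∀ i, 0 < σ i)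
    (hζdeg : ∀ i, (ζ i).natDegree ≤ n)
    (hζspan : ∀ p : Polynomial ℂ, p.natDegree ≤ n → p ∈ Submodule.span ℂ (Set.range ζ))
    (hζw : ∀ i j, wInner α β γ (pf (ζ i)) (pf (ζ j)) = if i = j then 1 else 0)
    (hζd : ∀ i j, discInner m (pf (ζ i)) (pf (ζ j)) =
      if i = j then (((σ i) ^ 2 : ℝ) : ℂ) else 0)
    (φ : ℕ → Polynomial ℂ) (hφdeg : ∀ i ≤ n, (φ i).natDegree = i)
    (hφorth : ∀ i ≤ n, ∀ j ≤ n,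
      wInner α β γ (pf (φ i)) (pf (φ j)) = if i = j then 1 else 0)
    (ε : ℝ) (hε : 0 < ε) :
    C1const m n ζ σ ε ≤ Cquant m n γ (ε / (Real.sqrt 2 * cConst n γ φ)) := by
  classical
  have hγ0 : (0:ℝ) < γ := by linarith
  have hm1 : 1 ≤ m := hn.trans hmn
  have hmR : (0:ℝ) < (m:ℝ) := by exact_mod_cast hm1
  have hw : IntervalIntegrable (jweight α β γ) MeasureTheory.volume (-γ) γ :=
    jweight_integrable hα hβ hγ0
  have hc0 : 0 ≤ cConst n γ φ := Real.iSup_nonneg fun _ => Real.sqrt_nonneg _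
  unfold C1const Cquant
  set δ := ε / (Real.sqrt 2 * cConst n γ φ) with hδdef
  set v : ℕ → ℂ := fun i => ((node m i : ℝ) : ℂ) with hv
  have hinj : Set.InjOn v (Finset.range (n+1) : Finset ℕ) := by
    intro i _ j _ hij
    have h1' : ((node m i : ℝ) : ℂ) = ((node m j : ℝ) : ℂ) := hij
    have h1 : node m i = node m j := by exact_mod_cast h1'
    have h2 : (i:ℝ) = j := by
      unfold node at h1
      have h3 : 2 * (i:ℝ) / m = 2 * j / m := by linarith
      have hm0 : (m:ℝ) ≠ 0 := ne_of_gt hmR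
      field_simp at h3
      exact_mod_cast h3
    exact_mod_cast h2
  have hS2bdd : BddAbove {r : ℝ | ∃ p : Polynomial ℂ, p.natDegree ≤ n ∧ discSup m (pf p) ≤ 1 ∧
      supNorm (Set.Icc (-γ) γ) (pf p) ≤ δ⁻¹ ∧ r = supNorm (Set.Icc (-1) 1) (pf p)} := by
    refine ⟨∑ i ∈ Finset.range (n+1), supNorm (Set.Icc (-1) 1)
      (pf (Lagrange.basis (Finset.range (n+1)) v i)), ?_⟩
    rintro r ⟨p, hdeg, hds, -, rfl⟩
    have hdlt : p.degree < (Finset.range (n+1)).card := by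
      rw [Finset.card_range]
      calc p.degree ≤ (p.natDegree : WithBot ℕ) := Polynomial.degree_le_natDegree
        _ < ((n+1:ℕ) : WithBot ℕ) := by exact_mod_cast Nat.lt_succ_of_le hdeg
    have hrep := Lagrange.eq_interpolate hinj hdlt
    refine Real.iSup_le ?_ (Finset.sum_nonneg fun i _ =>
      Real.iSup_nonneg fun _ => norm_nonneg _)
    rintro ⟨x, hx⟩
    have hx1 : pf p x = ∑ i ∈ Finset.range (n+1),
        Polynomial.eval (v i) p
          * Polynomial.eval ((x:ℂ)) (Lagrange.basis (Finset.range (n+1)) v i) := by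
      conv_lhs => rw [pf, hrep]
      rw [Lagrange.interpolate_apply, Polynomial.eval_finset_sum]
      exact Finset.sum_congr rfl fun i _ => by
        rw [Polynomial.eval_mul, Polynomial.eval_C]
    calc ‖pf p x‖
        ≤ ∑ i ∈ Finset.range (n+1), ‖Polynomial.eval (v i) p‖
            * ‖Polynomial.eval ((x:ℂ))
              (Lagrange.basis (Finset.range (n+1)) v i)‖ := by
          rw [hx1]
          refine (norm_sum_le _ _).trans (le_of_eq ?_)
          exact Finset.sum_congr rfl fun i _ => norm_mul _ _
      _ ≤ ∑ i ∈ Finset.range (n+1), 1 * supNorm (Set.Icc (-1) 1)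
            (pf (Lagrange.basis (Finset.range (n+1)) v i)) := by
          refine Finset.sum_le_sum fun i hi => ?_
          refine mul_le_mul ?_ (le_supNorm _ hx) (norm_nonneg _) zero_le_one
          have hki : i < m + 1 := by
            have := Finset.mem_range.mp hi; omega
          exact (le_discSup m (pf p) hki).trans hds
      _ = _ := by simp
  refine csSup_le_csSup hS2bdd ⟨supNorm (Set.Icc (-1) 1) (pf (0:Polynomial ℂ)), 0,
    Submodule.zero_mem _, ?_, rfl⟩ ?_
  · unfold discSup
    exact Real.iSup_le (fun k => by simp [pf]) zero_le_one
  rintro r ⟨p, hpspan, hpd, rfl⟩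
  have himg : ζ '' {i | ε < σ i}
      = Set.range (fun i : {i : Fin (n+1) // ε < σ i} => ζ (i : Fin (n+1))) :=
    Set.image_eq_range _ _
  rw [himg] at hpspan
  obtain ⟨cc, hcc⟩ := (Submodule.mem_span_range_iff_exists_fun ℂ).1 hpspan
  set a : Fin (n+1) → ℂ := fun i => if h : ε < σ i then cc ⟨i, h⟩ else 0 with ha
  have hpa : ∑ i : Fin (n+1), a i • ζ i = p := by
    rw [← hcc]
    rw [← Finset.sum_filter_of_ne (p := fun i : Fin (n+1) => ε < σ i)
      (f := fun i => a i • ζ i) (fun x _ hx => by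
        by_contra h
        exact hx (by simp [ha, dif_neg h]))]
    rw [Finset.sum_subtype (p := fun i : Fin (n+1) => ε < σ i)
      (Finset.univ.filter fun i : Fin (n+1) => ε < σ i)
      (fun x => by simp) (fun i => a i • ζ i)]
    exact Finset.sum_congr rfl fun i _ => by simp [ha, dif_pos i.2]
  have hdeg : p.natDegree ≤ n := by
    rw [← hpa]
    exact Polynomial.natDegree_sum_le_of_forall_le _ _ fun i _ =>
      (Polynomial.natDegree_smul_le _ _).trans (hζdeg i)
  have hd1 : discInner m (pf p) (pf p)
      = ((∑ i : Fin (n+1), ‖a i‖^2 * σ i^2 : ℝ) : ℂ) := by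
    rw [← hpa, discInner_sum_left]
    have hrow : ∀ i : Fin (n+1),
        discInner m (pf (ζ i)) (pf (∑ j : Fin (n+1), a j • ζ j))
          = (starRingEnd ℂ) (a i) * (((σ i)^2 : ℝ) : ℂ) := by
      intro i
      rw [discInner_sum_right]
      rw [Finset.sum_congr rfl (fun j _ => by rw [hζd i j])]
      simp [mul_ite, Finset.sum_ite_eq]
    rw [Finset.sum_congr rfl fun i _ => by rw [hrow i]]
    push_cast
    refine Finset.sum_congr rfl fun i _ => ?_
    rw [← mul_assoc, Complex.mul_conj, Complex.normSq_eq_norm_sq]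
    push_cast
    ring
  have hd2 : discInner m (pf p) (pf p)
      = (((2 / ((m:ℝ)+1)) * ∑ k ∈ Finset.range (m+1),
          ‖pf p (node m k)‖^2 : ℝ) : ℂ) := by
    simp only [discInner, Complex.mul_conj, Complex.normSq_eq_norm_sq]
    push_cast
    ring
  have hA2 : ∑ i : Fin (n+1), ‖a i‖^2 * σ i^2 ≤ 2 := by
    have heq : (∑ i : Fin (n+1), ‖a i‖^2 * σ i^2)
        = (2 / ((m:ℝ)+1)) * ∑ k ∈ Finset.range (m+1), ‖pf p (node m k)‖^2 := by
      have h := hd1.symm.trans hd2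
      exact_mod_cast h
    rw [heq]
    have hsum : ∑ k ∈ Finset.range (m+1), ‖pf p (node m k)‖^2 ≤ ((m:ℝ)+1) := by
      calc ∑ k ∈ Finset.range (m+1), ‖pf p (node m k)‖^2
          ≤ ∑ _k ∈ Finset.range (m+1), (1:ℝ) := by
            refine Finset.sum_le_sum fun k hk => ?_
            have h1 := (le_discSup m (pf p) (Finset.mem_range.mp hk)).trans hpd
            calc ‖pf p (node m k)‖^2 ≤ 1^2 :=
                  pow_le_pow_left₀ (norm_nonneg _) h1 2
              _ = 1 := one_pow 2
        _ = ((m:ℝ)+1) := by simp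
    calc (2 / ((m:ℝ)+1)) * ∑ k ∈ Finset.range (m+1), ‖pf p (node m k)‖^2
        ≤ (2 / ((m:ℝ)+1)) * ((m:ℝ)+1) := by
          refine mul_le_mul_of_nonneg_left hsum (by positivity)
      _ = 2 := by field_simp
  have hSa : ∑ i : Fin (n+1), ‖a i‖^2 ≤ 2 / ε^2 := by
    rw [le_div_iff₀ (by positivity : (0:ℝ) < ε^2)]
    calc (∑ i : Fin (n+1), ‖a i‖^2) * ε^2
        = ∑ i : Fin (n+1), ‖a i‖^2 * ε^2 := by rw [Finset.sum_mul]
      _ ≤ ∑ i : Fin (n+1), ‖a i‖^2 * σ i^2 := by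
          refine Finset.sum_le_sum fun i _ => ?_
          by_cases h : ε < σ i
          · exact mul_le_mul_of_nonneg_left
              (pow_le_pow_left₀ hε.le h.le 2) (sq_nonneg _)
          · simp [ha, dif_neg h]
      _ ≤ 2 := hA2
  have hw1 : wInner α β γ (pf p) (pf p)
      = ((∑ i : Fin (n+1), ‖a i‖^2 : ℝ) : ℂ) := by
    rw [← hpa, wInner_sum_left hw]
    have hrow : ∀ i : Fin (n+1),
        wInner α β γ (pf (ζ i)) (pf (∑ j : Fin (n+1), a j • ζ j))
          = (starRingEnd ℂ) (a i) := by
      intro i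
      rw [wInner_sum_right hw]
      rw [Finset.sum_congr rfl fun j _ => by rw [hζw i j]]
      simp [mul_ite, Finset.sum_ite_eq]
    rw [Finset.sum_congr rfl fun i _ => by rw [hrow i]]
    push_cast
    refine Finset.sum_congr rfl fun i _ => ?_
    rw [Complex.mul_conj, Complex.normSq_eq_norm_sq]
    push_cast
    ring
  obtain ⟨b, hb⟩ := phi_span hw n φ hφdeg hφorth p hdeg
  have hw2 : wInner α β γ (pf p) (pf p)
      = ((∑ i : Fin (n+1), ‖b i‖^2 : ℝ) : ℂ) := by
    rw [← hb, wInner_sum_left hw]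
    have hrow : ∀ i : Fin (n+1),
        wInner α β γ (pf (φ (i:ℕ))) (pf (∑ j : Fin (n+1), b j • φ (j:ℕ)))
          = (starRingEnd ℂ) (b i) := by
      intro i
      rw [wInner_sum_right hw]
      rw [Finset.sum_congr rfl fun j _ => by
        rw [hφorth (i:ℕ) (Nat.lt_succ_iff.mp i.isLt) (j:ℕ) (Nat.lt_succ_iff.mp j.isLt)]]
      simp [Fin.val_inj, mul_ite, Finset.sum_ite_eq]
    rw [Finset.sum_congr rfl fun i _ => by rw [hrow i]]
    push_cast
    refine Finset.sum_congr rfl fun i _ => ?_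
    rw [Complex.mul_conj, Complex.normSq_eq_norm_sq]
    push_cast
    ring
  have hb2 : ∑ i : Fin (n+1), ‖b i‖^2 ≤ 2 / ε^2 := by
    have heq : (∑ i : Fin (n+1), ‖b i‖^2)
        = ∑ i : Fin (n+1), ‖a i‖^2 := by
      have h := hw2.symm.trans hw1
      exact_mod_cast h
    rw [heq]; exact hSa
  have hbdd2 : BddAbove (Set.range fun x : Set.Icc (-γ) γ =>
      Real.sqrt (∑ i ∈ Finset.range (n+1), ‖pf (φ i) (x:ℝ)‖^2)) := by
    have hcont : Continuous fun x : ℝ =>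
        Real.sqrt (∑ i ∈ Finset.range (n+1), ‖pf (φ i) x‖^2) :=
      Real.continuous_sqrt.comp
        (continuous_finset_sum _ fun i _ => (abs_pf_continuous (φ i)).pow 2)
    have himg2 : (fun x : ℝ =>
        Real.sqrt (∑ i ∈ Finset.range (n+1), ‖pf (φ i) x‖^2)) '' Set.Icc (-γ) γ
        = Set.range fun x : Set.Icc (-γ) γ =>
          Real.sqrt (∑ i ∈ Finset.range (n+1), ‖pf (φ i) (x:ℝ)‖^2) :=
      Set.image_eq_range _ _
    rw [← himg2]
    exact (isCompact_Icc.image hcont).bddAbove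
  have hkey : ∀ x : Set.Icc (-γ) γ,
      ‖pf p (x:ℝ)‖ ≤ Real.sqrt 2 / ε * cConst n γ φ := by
    intro x
    have hx1 : pf p (x:ℝ) = ∑ i : Fin (n+1), b i * pf (φ (i:ℕ)) (x:ℝ) := by
      rw [← hb, pf_sum]
    calc ‖pf p (x:ℝ)‖
        ≤ ∑ i : Fin (n+1), ‖b i‖ * ‖pf (φ (i:ℕ)) (x:ℝ)‖ := by
          rw [hx1]
          refine (norm_sum_le _ _).trans (le_of_eq ?_)
          exact Finset.sum_congr rfl fun i _ => norm_mul _ _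
      _ ≤ Real.sqrt (∑ i : Fin (n+1), ‖b i‖^2)
          * Real.sqrt (∑ i : Fin (n+1), ‖pf (φ (i:ℕ)) (x:ℝ)‖^2) :=
          sqrt_cauchy _ _ _
      _ ≤ (Real.sqrt 2 / ε) * cConst n γ φ := by
          refine mul_le_mul ?_ ?_ (Real.sqrt_nonneg _)
            (div_nonneg (Real.sqrt_nonneg 2) hε.le)
          · have h1 := Real.sqrt_le_sqrt hb2
            rwa [show (2:ℝ)/ε^2 = (Real.sqrt 2 / ε)^2 by
              rw [div_pow, Real.sq_sqrt (by norm_num : (0:ℝ) ≤ 2)],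
              Real.sqrt_sq (div_nonneg (Real.sqrt_nonneg 2) hε.le)] at h1
          · rw [show (∑ i : Fin (n+1), ‖pf (φ (i:ℕ)) (x:ℝ)‖^2)
                = ∑ i ∈ Finset.range (n+1), ‖pf (φ i) (x:ℝ)‖^2 by
                exact Fin.sum_univ_eq_sum_range
                  (fun i => ‖pf (φ i) (x:ℝ)‖^2) (n+1)]
            unfold cConst
            exact le_ciSup hbdd2 x
  refine ⟨p, hdeg, hpd, ?_, rfl⟩
  have hδinv : δ⁻¹ = Real.sqrt 2 / ε * cConst n γ φ := by
    rw [hδdef, inv_div]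
    ring
  rw [hδinv]
  unfold supNorm
  exact Real.iSup_le hkey (mul_nonneg (div_nonneg (Real.sqrt_nonneg 2) hε.le) hc0)
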